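/- Let ψ, Q ∈ ℝ, let ε ≥ 0 and let γ > 0. Then the relaxed seepage conditions ψ ≤ ε, Q ≤ 0 and Q·(ψ - ε) = 0 hold simultaneously if and only if ψ - ε = -(1/γ)·max(0, Q - γ·(ψ - ε)). -/

import Mathlib

/-- Relaxed seepage conditions `ψ ≤ ε`, `Q ≤ 0`, `Q·(ψ - ε) = 0` are equivalent to the
penalized equation `ψ - ε = -(1/γ)·max 0 (Q - γ·(ψ - ε))` for `γ > 0`. -/
theorem relaxed_seepage_iff_penalized (ψ Q ε γ : ℝ) (hε : 0 ≤ ε) (hγ : 0 < γ) :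
    (ψ ≤ ε ∧ Q ≤ 0 ∧ Q * (ψ - ε) = 0) ↔
      ψ - ε = -(1 / γ) * max 0 (Q - γ * (ψ - ε)) := by
  have hγ' : γ ≠ 0 := ne_of_gt hγ
  constructor
  · rintro ⟨h1, h2, h3⟩
    rcases mul_eq_zero.mp h3 with hQ | ha
    · rw [hQ]
      rw [max_eq_right (by nlinarith)]
      field_simp
      ring
    · rw [ha]
      rw [max_eq_left (by nlinarith)]
      ring
  · intro h
    rcases le_or_gt (Q - γ * (ψ - ε)) 0 with hc | hc
    · rw [max_eq_left hc] at h
      have ha : ψ - ε = 0 := by linarith [h, mul_zero (-(1/γ))]; 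
      have hQ : Q ≤ 0 := by nlinarith
      exact ⟨by linarith, hQ, by rw [ha]; ring⟩
    · rw [max_eq_right hc.le] at h
      have hQ : Q = 0 := by field_simp at h; nlinarith
      have ha : ψ - ε ≤ 0 := by nlinarith
      exact ⟨by linarith, hQ.le, by rw [hQ]; ring⟩
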